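/- arXiv:2001.03884 — 2 statements merged into one kernel-verified Lean document; each statement's English description precedes it below -/
import Mathlib

section
/- For a real m×n matrix A, define F : [0,1]^n → ℝ by F(α) = Σ_{ν∈{0,1}^n} rank(A^ν) · Π_{j=1}^n α_j^{ν_j} (1−α_j)^{1−ν_j}. Then F is nondecreasing in each coordinate: if α, α′ ∈ [0,1]^n satisfy α_i ≤ α′_i for every i, then F(α) ≤ F(α′). -/
noncomputable section

/-- the submatrix of `A` keeping the columns `i` with `ν i = true`. -/
def colSub {m n : ℕ} (A : Matrix (Fin m) (Fin n) ℝ) (ν : Fin n → Bool) :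
    Matrix (Fin m) {i : Fin n // ν i = true} ℝ :=
  A.submatrix id Subtype.val

/-- `rank(A^ν)`, the rank of the submatrix of `A` formed by the columns `i` with `ν i = true`. -/
def subRank {m n : ℕ} (A : Matrix (Fin m) (Fin n) ℝ) (ν : Fin n → Bool) : ℕ :=
  (colSub A ν).rank

/-- `F(α) = Σ_{ν ∈ {0,1}^n} rank(A^ν) · Π_j α_j^{ν_j} (1 − α_j)^{1 − ν_j}`. -/
def rankExpectation {m n : ℕ} (A : Matrix (Fin m) (Fin n) ℝ) (α : Fin n → ℝ) : ℝ :=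
  ∑ ν : Fin n → Bool,
    (subRank A ν : ℝ) * ∏ j : Fin n, (if ν j then α j else 1 - α j)

lemma subRank_mono {m n : ℕ} (A : Matrix (Fin m) (Fin n) ℝ) {ν ν' : Fin n → Bool}
    (h : ∀ i, ν i = true → ν' i = true) : subRank A ν ≤ subRank A ν' := by
  unfold subRank
  rw [Matrix.rank_eq_finrank_span_cols, Matrix.rank_eq_finrank_span_cols]
  apply Submodule.finrank_mono
  apply Submodule.span_mono
  rintro x ⟨⟨j, hj⟩, rfl⟩
  exact ⟨⟨j, h j hj⟩, rfl⟩

lemma step {m n : ℕ} (A : Matrix (Fin m) (Fin n) ℝ) (i : Fin n) (γ : Fin n → ℝ)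
    (hγ : ∀ j, γ j ∈ Set.Icc (0 : ℝ) 1) (t : ℝ) (ht : t ∈ Set.Icc (0 : ℝ) 1)
    (h : γ i ≤ t) :
    rankExpectation A γ ≤ rankExpectation A (Function.update γ i t) := by
  classical
  set Q : (Fin n → Bool) → ℝ := fun ν => ∏ j ∈ Finset.univ.erase i,
      (if ν j then γ j else 1 - γ j) with hQ
  have hQnonneg : ∀ ν, 0 ≤ Q ν := by
    intro ν
    apply Finset.prod_nonneg
    intro j _
    rcases hγ j with ⟨h0, h1⟩
    split <;> linarith
  have hQupdate : ∀ ν b, Q (Function.update ν i b) = Q ν := by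
    intro ν b
    apply Finset.prod_congr rfl
    intro j hj
    rw [Function.update_of_ne (Finset.ne_of_mem_erase hj)]
  -- decompose the product
  have hprod : ∀ (β : Fin n → ℝ) (ν : Fin n → Bool),
      (∏ j : Fin n, (if ν j then β j else 1 - β j))
        = (if ν i then β i else 1 - β i) *
          ∏ j ∈ Finset.univ.erase i, (if ν j then β j else 1 - β j) := by
    intro β ν
    rw [← Finset.mul_prod_erase Finset.univ _ (Finset.mem_univ i)]
  have hFγ : rankExpectation A γ
      = ∑ ν : Fin n → Bool, (subRank A ν : ℝ) * ((if ν i then γ i else 1 - γ i) * Q ν) := by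
    unfold rankExpectation
    exact Finset.sum_congr rfl fun ν _ => by rw [hprod]
  have hFγ' : rankExpectation A (Function.update γ i t)
      = ∑ ν : Fin n → Bool, (subRank A ν : ℝ) * ((if ν i then t else 1 - t) * Q ν) := by
    unfold rankExpectation
    refine Finset.sum_congr rfl fun ν _ => ?_
    rw [hprod]
    have hz : (∏ j ∈ Finset.univ.erase i,
        if ν j then Function.update γ i t j else 1 - Function.update γ i t j) = Q ν :=
      Finset.prod_congr rfl fun j hj => by
        rw [Function.update_of_ne (Finset.ne_of_mem_erase hj)]
    rw [hz, Function.update_self]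
  rw [hFγ, hFγ', ← sub_nonneg, ← Finset.sum_sub_distrib]
  have key : ∀ ν : Fin n → Bool,
      (subRank A ν : ℝ) * ((if ν i then t else 1 - t) * Q ν)
        - (subRank A ν : ℝ) * ((if ν i then γ i else 1 - γ i) * Q ν)
      = (t - γ i) * ((if ν i then (1:ℝ) else -1) * ((subRank A ν : ℝ) * Q ν)) := by
    intro ν
    split <;> ring
  rw [Finset.sum_congr rfl fun ν _ => key ν, ← Finset.mul_sum]
  have hsplit :
      (∑ ν : Fin n → Bool, (if ν i then (1:ℝ) else -1) * ((subRank A ν : ℝ) * Q ν))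
      = ∑ ν ∈ Finset.univ.filter (fun ν : Fin n → Bool => ν i = true),
          (((subRank A ν : ℝ) - (subRank A (Function.update ν i false) : ℝ)) * Q ν) := by
    rw [← Finset.sum_filter_add_sum_filter_not Finset.univ (fun ν : Fin n → Bool => ν i = true)]
    have h2 : (∑ ν ∈ Finset.univ.filter (fun ν : Fin n → Bool => ¬ ν i = true),
          (if ν i then (1:ℝ) else -1) * ((subRank A ν : ℝ) * Q ν))
        = ∑ ν ∈ Finset.univ.filter (fun ν : Fin n → Bool => ν i = true),
          (-1) * ((subRank A (Function.update ν i false) : ℝ) * Q ν) := by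
      refine Finset.sum_nbij' (fun ν => Function.update ν i true)
        (fun ν => Function.update ν i false) ?_ ?_ ?_ ?_ ?_
      · intro ν hν; simp
      · intro ν hν; simp
      · intro ν hν
        simp only [Finset.mem_filter] at hν
        funext j
        by_cases hj : j = i
        · subst hj; simp at hν ⊢; simpa using hν.symm
        · simp [Function.update_of_ne hj]
      · intro ν hν
        simp only [Finset.mem_filter] at hν
        funext j
        by_cases hj : j = i
        · subst hj; simp [hν]
        · simp [Function.update_of_ne hj]
      · intro ν hν
        simp only [Finset.mem_filter] at hν
        have h1 : Function.update ν i true i = true := by simp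
        rw [if_neg (by simp [hν.2]), hQupdate]
        have : Function.update (Function.update ν i true) i false = Function.update ν i false := by
          simp [Function.update_idem]
        rw [this]
        have hν' : Function.update ν i false = ν := by
          funext j
          by_cases hj : j = i
          · subst hj; simp; simpa using hν.2
          · simp [Function.update_of_ne hj]
        rw [hν']
    rw [h2, ← Finset.sum_add_distrib]
    refine Finset.sum_congr rfl fun ν hν => ?_
    simp only [Finset.mem_filter] at hν
    rw [if_pos hν.2]
    ring
  rw [hsplit]
  apply mul_nonneg (by linarith)
  apply Finset.sum_nonneg
  intro ν hν
  apply mul_nonneg _ (hQnonneg ν)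
  rw [sub_nonneg, Nat.cast_le]
  apply subRank_mono
  intro j hj
  by_cases hji : j = i
  · subst hji; simp at hν; exact hν
  · rwa [Function.update_of_ne hji] at hj

/-- The expected rank `F(α) = Σ_ν rank(A^ν) Π_j α_j^{ν_j}(1-α_j)^{1-ν_j}`
is nondecreasing in each coordinate of `α` on `[0,1]^n`. -/
theorem rankExpectation_monotone {m n : ℕ} (A : Matrix (Fin m) (Fin n) ℝ)
    (α α' : Fin n → ℝ)
    (hα : ∀ i, α i ∈ Set.Icc (0 : ℝ) 1) (hα' : ∀ i, α' i ∈ Set.Icc (0 : ℝ) 1)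
    (hle : ∀ i, α i ≤ α' i) :
    rankExpectation A α ≤ rankExpectation A α' := by
  classical
  have aux : ∀ s : Finset (Fin n),
      rankExpectation A α ≤ rankExpectation A (s.piecewise α' α) := by
    intro s
    induction s using Finset.induction_on with
    | empty => rw [Finset.piecewise_empty]
    | @insert i s hi ih =>
      rw [Finset.piecewise_insert]
      refine le_trans ih (step A i _ ?_ (α' i) (hα' i) ?_)
      · intro j
        by_cases hj : j ∈ s <;> simp [Finset.piecewise, hj, hα j, hα' j]
      · by_cases hi' : i ∈ s <;> simp [Finset.piecewise, hi', hle i]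
  simpa [Finset.piecewise_univ] using aux Finset.univ

end
end

section
/- Let X be a random vector in ℝ^n with absolutely continuous distribution such that h(X) > −∞ and E‖X‖_α^β < ∞ for some α, β > 0. Let V be an n×n orthogonal matrix and, for 1 ≤ k < n, let V_k be the n×k matrix consisting of its first k columns. Then V_kᵀX has an absolutely continuous distribution on ℝ^k and h(V_kᵀ X) > −∞. -/
open MeasureTheory ProbabilityTheory Real Filter
open scoped ENNReal

noncomputable section


lemma aux_measurable_mulVec {n m : ℕ} (M : Matrix (Fin n) (Fin m) ℝ) :
    Measurable M.mulVec := by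
  apply measurable_pi_lambda
  intro j
  simp only [Matrix.mulVec, dotProduct]
  exact Finset.measurable_sum _ fun i _ => (measurable_pi_apply i).const_mul _

lemma aux_rnDeriv_map {δ : Type*} [MeasurableSpace δ] (lam : Measure δ) [SigmaFinite lam]
    (μ : Measure δ) [SigmaFinite μ] (e : δ ≃ᵐ δ) (he : MeasurePreserving (⇑e) lam lam)
    (hμ : μ ≪ lam) :
    ∀ᵐ x ∂μ, ((μ.map e).rnDeriv lam) (e x) = μ.rnDeriv lam x := by
  have hmeas : Measurable (μ.rnDeriv lam) := Measure.measurable_rnDeriv _ _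
  have hmap : μ.map e = lam.withDensity (μ.rnDeriv lam ∘ ⇑e.symm) := by
    ext s hs
    rw [Measure.map_apply e.measurable hs, withDensity_apply _ hs]
    have h1 : ∫⁻ x in s, (μ.rnDeriv lam ∘ ⇑e.symm) x ∂lam
        = ∫⁻ x in s, (μ.rnDeriv lam ∘ ⇑e.symm) x ∂(lam.map e) := by rw [he.map_eq]
    rw [h1, setLIntegral_map hs (hmeas.comp e.symm.measurable) e.measurable]
    simp only [Function.comp_apply, MeasurableEquiv.symm_apply_apply]
    exact (Measure.setLIntegral_rnDeriv hμ _).symm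
  have h1 : (μ.map e).rnDeriv lam =ᵐ[lam] (μ.rnDeriv lam ∘ ⇑e.symm) := by
    rw [hmap]
    exact Measure.rnDeriv_withDensity lam (hmeas.comp e.symm.measurable)
  have h3 : ∀ᵐ x ∂lam, ((μ.map e).rnDeriv lam) (e x) = (μ.rnDeriv lam ∘ ⇑e.symm) (e x) :=
    he.quasiMeasurePreserving.tendsto_ae.eventually h1
  have h4 : ∀ᵐ x ∂μ, ((μ.map e).rnDeriv lam) (e x) = (μ.rnDeriv lam ∘ ⇑e.symm) (e x) := hμ.ae_le h3
  filter_upwards [h4] with x hx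
  simpa using hx

lemma aux_log_split {a b d : ℝ} (ha : 0 ≤ a) (hb : 0 < b) (hd : 0 < d) :
    ENNReal.ofReal (Real.log a) ≤ ENNReal.ofReal (Real.log b)
      + ENNReal.ofReal (Real.log (a * d / b)) + ENNReal.ofReal (Real.log d⁻¹) := by
  rcases eq_or_lt_of_le ha with h | h
  · simp [← h]
  · have key : Real.log a = Real.log b + Real.log (a * d / b) + Real.log d⁻¹ := by
      rw [Real.log_div (by positivity) hb.ne', Real.log_mul h.ne' hd.ne', Real.log_inv]
      ring
    rw [key]
    exact le_trans ENNReal.ofReal_add_le (add_le_add ENNReal.ofReal_add_le le_rfl)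

lemma aux_xlogx (a : ℝ) {s : ℝ} (hs : 0 ≤ s) :
    ENNReal.ofReal a * ENNReal.ofReal (Real.log (s / a)) ≤ ENNReal.ofReal s := by
  rcases le_or_gt a 0 with h | h
  · simp [ENNReal.ofReal_eq_zero.2 h]
  rcases le_or_gt (s / a) 1 with h2 | h2
  · have : ENNReal.ofReal (Real.log (s / a)) = 0 := by
      simp [ENNReal.ofReal_eq_zero.2 (Real.log_nonpos (by positivity) h2)]
    simp [this]
  · have hsa : 0 < s / a := lt_trans one_pos h2
    rw [← ENNReal.ofReal_mul h.le]
    apply ENNReal.ofReal_le_ofReal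
    have h3 : Real.log (s / a) ≤ s / a - 1 := Real.log_le_sub_one_of_pos hsa
    calc a * Real.log (s / a) ≤ a * (s / a - 1) := by
          exact mul_le_mul_of_nonneg_left h3 h.le
      _ = s - a := by field_simp
      _ ≤ s := by linarith

lemma aux_log_one_add {t β : ℝ} (ht : 0 ≤ t) (hβ : 0 < β) :
    Real.log (1 + t) ≤ Real.log 2 + t ^ β / β := by
  rcases le_or_gt t 1 with h | h
  · have h1 : Real.log (1 + t) ≤ Real.log 2 := Real.log_le_log (by positivity) (by linarith)
    have h2 : 0 ≤ t ^ β / β := div_nonneg (Real.rpow_nonneg ht _) hβ.le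
    linarith
  · have ht0 : (0:ℝ) < t := lt_trans one_pos h
    have h1 : Real.log (1 + t) ≤ Real.log (2 * t) := Real.log_le_log (by positivity) (by linarith)
    rw [Real.log_mul two_ne_zero ht0.ne'] at h1
    have h2 : Real.log t ≤ t ^ β / β := by
      rw [le_div_iff₀ hβ, mul_comm, ← Real.log_rpow ht0]
      have := Real.log_le_sub_one_of_pos (Real.rpow_pos_of_pos ht0 β)
      linarith
    linarith


lemma aux_t3_bound {n k : ℕ} (α β : ℝ) (hα : 0 < α) (hβ : 0 < β)
    (V : Matrix (Fin n) (Fin n) ℝ) (hVV : V * V.transpose = 1)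
    (x : Fin n → ℝ) (v : {i : Fin n // ¬ (i : ℕ) < k} → ℝ)
    (hv : ∀ j, v j = V.transpose.mulVec x j.1) :
    ENNReal.ofReal (Real.log ((1 + ‖v‖) ^ (-(n:ℝ)))⁻¹)
      ≤ ENNReal.ofReal ((n:ℝ) * Real.log 2)
        + ENNReal.ofReal (((n:ℝ)/β) * (Real.sqrt n) ^ β)
          * ENNReal.ofReal ((∑ i, |x i| ^ α) ^ (β / α)) := by
  set c2 : ℝ := ((n:ℝ)/β) * (Real.sqrt n) ^ β with hc2def
  have hc2 : 0 ≤ c2 := by positivity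
  set S : ℝ := ∑ i, |x i| ^ α with hSdef
  have hS : 0 ≤ S := Finset.sum_nonneg fun i _ => Real.rpow_nonneg (abs_nonneg _) _
  have hdot : dotProduct (V.transpose.mulVec x) (V.transpose.mulVec x)
      = dotProduct x x := by
    rw [Matrix.dotProduct_mulVec, Matrix.vecMul_transpose, Matrix.mulVec_mulVec, hVV,
      Matrix.one_mulVec]
  have hcoord : ∀ j : Fin n,
      (V.transpose.mulVec x j) * (V.transpose.mulVec x j) ≤ dotProduct x x := by
    intro j
    rw [← hdot]
    exact Finset.single_le_sum
      (f := fun i => (V.transpose.mulVec x i) * (V.transpose.mulVec x i))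
      (fun i _ => mul_self_nonneg _) (Finset.mem_univ j)
  have habsle : ∀ i : Fin n, |x i| ≤ S ^ (1/α) := by
    intro i
    have h2 : |x i| ^ α ≤ S :=
      Finset.single_le_sum (fun i _ => Real.rpow_nonneg (abs_nonneg _) _) (Finset.mem_univ i)
    have h3 : |x i| = (|x i| ^ α) ^ (1/α) := by
      rw [← Real.rpow_mul (abs_nonneg _), mul_one_div, div_self hα.ne', Real.rpow_one]
    rw [h3]
    exact Real.rpow_le_rpow (Real.rpow_nonneg (abs_nonneg _) _) h2 (by positivity)
  have hxx : dotProduct x x ≤ (n : ℝ) * (S ^ (1/α) * S ^ (1/α)) := by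
    have hterm : ∀ i : Fin n, x i * x i ≤ S ^ (1/α) * S ^ (1/α) := by
      intro i
      rw [← abs_mul_abs_self]
      exact mul_le_mul (habsle i) (habsle i) (abs_nonneg _) (Real.rpow_nonneg hS _)
    calc dotProduct x x = ∑ i, x i * x i := rfl
      _ ≤ ∑ _i : Fin n, S ^ (1/α) * S ^ (1/α) := Finset.sum_le_sum fun i _ => hterm i
      _ = (n:ℝ) * (S ^ (1/α) * S ^ (1/α)) := by
          rw [Finset.sum_const, Finset.card_univ, Fintype.card_fin, nsmul_eq_mul]
  have hvj : ∀ j : {i : Fin n // ¬ (i : ℕ) < k}, |v j| ≤ Real.sqrt n * S ^ (1/α) := by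
    intro j
    have h3 : v j * v j ≤ (n:ℝ) * (S ^ (1/α) * S ^ (1/α)) := by
      rw [hv j]; exact le_trans (hcoord j.1) hxx
    have h4 : |v j| = Real.sqrt (v j * v j) := (Real.sqrt_mul_self_eq_abs _).symm
    rw [h4]
    calc Real.sqrt (v j * v j) ≤ Real.sqrt ((n:ℝ) * (S ^ (1/α) * S ^ (1/α))) :=
          Real.sqrt_le_sqrt h3
      _ = Real.sqrt n * Real.sqrt (S ^ (1/α) * S ^ (1/α)) := Real.sqrt_mul (by positivity) _
      _ = Real.sqrt n * S ^ (1/α) := by rw [Real.sqrt_mul_self (Real.rpow_nonneg hS _)]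
  have hnormv : ‖v‖ ≤ Real.sqrt n * S ^ (1/α) := by
    refine (pi_norm_le_iff_of_nonneg (by positivity)).mpr fun j => ?_
    rw [Real.norm_eq_abs]
    exact hvj j
  have hQval : Real.log ((1 + ‖v‖) ^ (-(n:ℝ)))⁻¹ = (n:ℝ) * Real.log (1 + ‖v‖) := by
    rw [Real.rpow_neg (by positivity), inv_inv, Real.log_rpow (by positivity)]
  have hlog : Real.log (1 + ‖v‖) ≤ Real.log 2 + ‖v‖ ^ β / β :=
    aux_log_one_add (norm_nonneg v) hβ
  have hvβ : ‖v‖ ^ β ≤ (Real.sqrt n) ^ β * S ^ (β/α) := by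
    calc ‖v‖ ^ β ≤ (Real.sqrt n * S ^ (1/α)) ^ β :=
          Real.rpow_le_rpow (norm_nonneg v) hnormv hβ.le
      _ = (Real.sqrt n) ^ β * (S ^ (1/α)) ^ β :=
          Real.mul_rpow (Real.sqrt_nonneg _) (Real.rpow_nonneg hS _)
      _ = (Real.sqrt n) ^ β * S ^ (β/α) := by
          rw [← Real.rpow_mul hS]
          congr 1
          ring
  have hm2 : (n:ℝ) * Real.log (1 + ‖v‖)
      ≤ (n:ℝ) * Real.log 2 + (n:ℝ) * (‖v‖ ^ β / β) := by
    have h := mul_le_mul_of_nonneg_left hlog (by positivity : (0:ℝ) ≤ (n:ℝ))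
    rw [mul_add] at h
    exact h
  have h7 : (n:ℝ) * (‖v‖ ^ β / β) ≤ c2 * S ^ (β/α) := by
    have h := mul_le_mul_of_nonneg_left hvβ (by positivity : (0:ℝ) ≤ (n:ℝ)/β)
    calc (n:ℝ) * (‖v‖ ^ β / β) = ((n:ℝ)/β) * ‖v‖ ^ β := by ring
      _ ≤ ((n:ℝ)/β) * ((Real.sqrt n) ^ β * S ^ (β/α)) := h
      _ = c2 * S ^ (β/α) := by rw [hc2def]; ring
  have hfinal : Real.log ((1 + ‖v‖) ^ (-(n:ℝ)))⁻¹ ≤ (n:ℝ) * Real.log 2 + c2 * S ^ (β/α) := by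
    rw [hQval]
    linarith
  calc ENNReal.ofReal (Real.log ((1 + ‖v‖) ^ (-(n:ℝ)))⁻¹)
      ≤ ENNReal.ofReal ((n:ℝ) * Real.log 2 + c2 * S ^ (β/α)) :=
        ENNReal.ofReal_le_ofReal hfinal
    _ ≤ ENNReal.ofReal ((n:ℝ) * Real.log 2) + ENNReal.ofReal (c2 * S ^ (β/α)) :=
        ENNReal.ofReal_add_le
    _ = ENNReal.ofReal ((n:ℝ) * Real.log 2) + ENNReal.ofReal c2 * ENNReal.ofReal (S ^ (β/α)) := by
        rw [ENNReal.ofReal_mul hc2]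

set_option maxHeartbeats 1000000 in
/-- **Statement 18.** Let `X` be an absolutely continuous random vector in `ℝ^n` with
`h(X) > −∞` (the positive part of `∫ log(dμ/dx) dμ` is finite) and `E‖X‖_α^β < ∞` for some
`α, β > 0`. If `V` is an `n × n` orthogonal matrix and `V_k` consists of its first `k`
columns (`1 ≤ k < n`), then `V_kᵀ X` is absolutely continuous on `ℝ^k` and
`h(V_kᵀ X) > −∞`. -/
theorem projection_absolutelyContinuous_diffEnt_lower
    {n k : ℕ} (hk1 : 1 ≤ k) (hk : k < n)
    (μ : Measure (Fin n → ℝ)) [IsProbabilityMeasure μ]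
    (hac : μ ≪ (volume : Measure (Fin n → ℝ)))
    (hhlow : ∫⁻ x, ENNReal.ofReal (Real.log ((μ.rnDeriv volume x).toReal)) ∂μ < ⊤)
    (α β : ℝ) (hα : 0 < α) (hβ : 0 < β)
    (hmom : ∫⁻ x, ENNReal.ofReal ((∑ i, |x i| ^ α) ^ (β / α)) ∂μ < ⊤)
    (V : Matrix (Fin n) (Fin n) ℝ) (hV : V ∈ Matrix.orthogonalGroup (Fin n) ℝ) :
    (μ.map ((V.submatrix id (Fin.castLE hk.le)).transpose.mulVec)
        ≪ (volume : Measure (Fin k → ℝ)))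
    ∧ ∫⁻ y, ENNReal.ofReal
          (Real.log (((μ.map ((V.submatrix id (Fin.castLE hk.le)).transpose.mulVec)).rnDeriv
            volume y).toReal))
        ∂(μ.map ((V.submatrix id (Fin.castLE hk.le)).transpose.mulVec)) < ⊤ := by
  classical
  -- matrix facts
  have hVV : V * V.transpose = 1 := by
    have h := (Matrix.mem_orthogonalGroup_iff (Fin n) ℝ).mp hV
    simpa [Matrix.star_eq_conjTranspose, Matrix.conjTranspose] using h
  have hVtV : V.transpose * V = 1 := by
    have h := (Matrix.mem_orthogonalGroup_iff' (Fin n) ℝ).mp hV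
    simpa [Matrix.star_eq_conjTranspose, Matrix.conjTranspose] using h
  have hdet : V.transpose.det = 1 ∨ V.transpose.det = -1 := by
    have h1 : V.det * V.transpose.det = 1 := by rw [← Matrix.det_mul, hVV, Matrix.det_one]
    rw [Matrix.det_transpose] at h1 ⊢
    exact mul_self_eq_one_iff.mp h1
  have hdetne : V.transpose.det ≠ 0 := by rcases hdet with h | h <;> rw [h] <;> norm_num
  -- the equivalence given by x ↦ Vᵀ x
  let eL : (Fin n → ℝ) ≃ᵐ (Fin n → ℝ) :=
    { toEquiv :=
        { toFun := V.transpose.mulVec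
          invFun := V.mulVec
          left_inv := fun x => by
            rw [Matrix.mulVec_mulVec, hVV, Matrix.one_mulVec]
          right_inv := fun x => by
            rw [Matrix.mulVec_mulVec, hVtV, Matrix.one_mulVec] }
      measurable_toFun := aux_measurable_mulVec _
      measurable_invFun := aux_measurable_mulVec _ }
  have heL : ⇑eL = V.transpose.mulVec := rfl
  have hLpres : MeasurePreserving (⇑eL) (volume : Measure (Fin n → ℝ)) volume := by
    refine ⟨aux_measurable_mulVec _, ?_⟩
    have h1 : ⇑(Matrix.toLin' V.transpose) = V.transpose.mulVec := by
      funext x; exact Matrix.toLin'_apply _ _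
    have h2 := Real.map_matrix_volume_pi_eq_smul_volume_pi hdetne
    rw [h1] at h2
    rw [heL, h2]
    have h3 : |V.transpose.det⁻¹| = 1 := by
      rcases hdet with h | h <;> rw [h] <;> norm_num
    rw [h3, ENNReal.ofReal_one, one_smul]
  -- pushforward under the full rotation
  set μ'' : Measure (Fin n → ℝ) := μ.map ⇑eL with hμ''def
  have hμ''ac : μ'' ≪ (volume : Measure (Fin n → ℝ)) := by
    have h := hac.map (f := ⇑eL) eL.measurable
    rwa [hLpres.map_eq] at h
  haveI : IsProbabilityMeasure μ'' := Measure.isProbabilityMeasure_map eL.measurable.aemeasurable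
  -- the coordinate projection
  set r : (Fin n → ℝ) → (Fin k → ℝ) := fun w j => w (Fin.castLE hk.le j) with hrdef
  have hr_meas : Measurable r := measurable_pi_lambda _ fun j => measurable_pi_apply _
  have hT_meas : Measurable ((V.submatrix id (Fin.castLE hk.le)).transpose.mulVec) :=
    aux_measurable_mulVec _
  have hTrL : (V.submatrix id (Fin.castLE hk.le)).transpose.mulVec = r ∘ ⇑eL := by
    funext x j
    show ((V.submatrix id (Fin.castLE hk.le)).transpose.mulVec x) j
        = (V.transpose.mulVec x) (Fin.castLE hk.le j)
    simp [Matrix.mulVec, dotProduct, Matrix.transpose_apply, Matrix.submatrix_apply]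
  set ν : Measure (Fin k → ℝ) :=
    μ.map ((V.submatrix id (Fin.castLE hk.le)).transpose.mulVec) with hνdef
  have hν_eq : ν = μ''.map r := by
    rw [hνdef, hμ''def, Measure.map_map hr_meas eL.measurable, hTrL]
  haveI : IsProbabilityMeasure ν := Measure.isProbabilityMeasure_map hT_meas.aemeasurable
  -- splitting of coordinates
  set e : (Fin n → ℝ) ≃ᵐ ({i : Fin n // (i : ℕ) < k} → ℝ) × ({i : Fin n // ¬ (i : ℕ) < k} → ℝ) :=
    MeasurableEquiv.piEquivPiSubtypeProd (fun _ : Fin n => ℝ) (fun i : Fin n => (i : ℕ) < k) with hedef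
  have he : MeasurePreserving (⇑e) (volume : Measure (Fin n → ℝ))
      ((volume : Measure ({i : Fin n // (i : ℕ) < k} → ℝ)).prod
        (volume : Measure ({i : Fin n // ¬ (i : ℕ) < k} → ℝ))) := by
    have h := MeasureTheory.volume_preserving_piEquivPiSubtypeProd
      (fun _ : Fin n => ℝ) (fun i : Fin n => (i : ℕ) < k)
    rwa [MeasureTheory.Measure.volume_eq_prod] at h
  -- reindexing of the first block
  let ι : Fin k ≃ {i : Fin n // (i : ℕ) < k} :=
    { toFun := fun j => ⟨Fin.castLE hk.le j, by simpa using j.2⟩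
      invFun := fun i => ⟨(i : Fin n), i.2⟩
      left_inv := fun j => by ext; simp
      right_inv := fun i => by ext; simp }
  set ru : ({i : Fin n // (i : ℕ) < k} → ℝ) → (Fin k → ℝ) := fun u j => u (ι j) with hrudef
  have hru : MeasurePreserving ru (volume : Measure ({i : Fin n // (i : ℕ) < k} → ℝ))
      (volume : Measure (Fin k → ℝ)) := by
    have h := (MeasureTheory.volume_measurePreserving_piCongrLeft
      (fun _ : {i : Fin n // (i : ℕ) < k} => ℝ) ι).symm
    convert h using 1
    exact funext fun u => funext fun j => rfl
  -- Part 1 : absolute continuity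
  have habs : ν ≪ (volume : Measure (Fin k → ℝ)) := by
    rw [hν_eq]
    refine Measure.AbsolutelyContinuous.mk fun s hs h0 => ?_
    rw [Measure.map_apply hr_meas hs]
    refine hμ''ac ?_
    have hset : r ⁻¹' s = ⇑e ⁻¹' ((ru ⁻¹' s) ×ˢ (Set.univ : Set ({i : Fin n // ¬ (i : ℕ) < k} → ℝ))) := by
      ext w
      simp only [Set.mem_preimage, Set.mem_prod, Set.mem_univ, and_true]
      exact Iff.rfl
    rw [hset, he.measure_preimage (((hru.measurable hs).prod MeasurableSet.univ).nullMeasurableSet),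
      Measure.prod_prod, hru.measure_preimage hs.nullMeasurableSet, h0, zero_mul]
  -- density of μ''
  set f : (Fin n → ℝ) → ℝ≥0∞ := μ''.rnDeriv volume with hfdef
  have hf_meas : Measurable f := Measure.measurable_rnDeriv _ _
  -- reference function on the remaining coordinates
  set q : ({i : Fin n // ¬ (i : ℕ) < k} → ℝ) → ℝ := fun v => (1 + ‖v‖) ^ (-(n:ℝ)) with hqdef
  have hq_pos : ∀ v, 0 < q v := fun v => Real.rpow_pos_of_pos (by positivity) _
  have hq_cont : Continuous q := by
    apply Continuous.rpow_const (continuous_const.add continuous_norm)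
    intro v; left; exact (by positivity : (0:ℝ) < 1 + ‖v‖).ne'
  have hq_meas : Measurable q := hq_cont.measurable
  set Q : (Fin n → ℝ) → ℝ := fun w => q ((e w).2) with hQdef
  have hQ_meas : Measurable Q := hq_meas.comp (measurable_snd.comp e.measurable)
  have hQ_pos : ∀ w, 0 < Q w := fun w => hq_pos _
  -- the goal integrand
  set G : (Fin k → ℝ) → ℝ≥0∞ :=
      fun y => ENNReal.ofReal (Real.log ((ν.rnDeriv volume y).toReal)) with hGdef
  have hg_meas : Measurable (ν.rnDeriv volume) := Measure.measurable_rnDeriv _ _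
  have hG_meas : Measurable G :=
    ENNReal.measurable_ofReal.comp (Real.measurable_log.comp hg_meas.ennreal_toReal)
  -- the three terms
  set t1 : (Fin n → ℝ) → ℝ≥0∞ := fun w => ENNReal.ofReal (Real.log ((f w).toReal)) with ht1def
  set t2 : (Fin n → ℝ) → ℝ≥0∞ := fun w =>
    ENNReal.ofReal (Real.log (((ν.rnDeriv volume (r w)).toReal * Q w) / (f w).toReal)) with ht2def
  set t3 : (Fin n → ℝ) → ℝ≥0∞ := fun w => ENNReal.ofReal (Real.log (Q w)⁻¹) with ht3def
  have ht1_meas : Measurable t1 :=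
    ENNReal.measurable_ofReal.comp (Real.measurable_log.comp hf_meas.ennreal_toReal)
  have ht2_meas : Measurable t2 := by
    apply ENNReal.measurable_ofReal.comp
    apply Real.measurable_log.comp
    exact (((hg_meas.comp hr_meas).ennreal_toReal).mul hQ_meas).div hf_meas.ennreal_toReal
  have ht3_meas : Measurable t3 :=
    ENNReal.measurable_ofReal.comp (Real.measurable_log.comp hQ_meas.inv)
  -- pointwise splitting
  have hA : ∀ᵐ w ∂μ'', G (r w) ≤ t1 w + t2 w + t3 w := by
    filter_upwards [Measure.rnDeriv_pos hμ''ac, hμ''ac.ae_le (Measure.rnDeriv_lt_top μ'' volume)]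
      with w hw1 hw2
    exact aux_log_split ENNReal.toReal_nonneg (ENNReal.toReal_pos hw1.ne' hw2.ne) (hQ_pos w)
  -- first term : from the entropy hypothesis on μ
  have hB : ∫⁻ w, t1 w ∂μ'' < ⊤ := by
    rw [hμ''def, lintegral_map ht1_meas eL.measurable]
    have hae := aux_rnDeriv_map volume μ eL hLpres hac
    have hcg : ∀ᵐ x ∂μ, t1 (eL x) = ENNReal.ofReal (Real.log ((μ.rnDeriv volume x).toReal)) := by
      filter_upwards [hae] with x hx
      have hfx : f (eL x) = μ.rnDeriv volume x := by rw [hfdef, hμ''def]; exact hx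
      show ENNReal.ofReal (Real.log ((f (eL x)).toReal)) = _
      rw [hfx]
    rwa [lintegral_congr_ae hcg]
  -- second term : the cross-entropy trick
  have hwd : μ'' = volume.withDensity f := (Measure.withDensity_rnDeriv_eq μ'' volume hμ''ac).symm
  have hC : ∫⁻ w, t2 w ∂μ'' < ⊤ := by
    have h1 : ∫⁻ w, t2 w ∂μ'' = ∫⁻ w, (f * t2) w ∂(volume : Measure (Fin n → ℝ)) := by
      conv_lhs => rw [hwd]
      exact lintegral_withDensity_eq_lintegral_mul volume hf_meas ht2_meas
    have h2 : ∀ᵐ w ∂(volume : Measure (Fin n → ℝ)),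
        (f * t2) w ≤ ENNReal.ofReal ((ν.rnDeriv volume (r w)).toReal * Q w) := by
      filter_upwards [Measure.rnDeriv_lt_top μ'' volume] with w hw
      have hfw : (f w) = ENNReal.ofReal ((f w).toReal) := (ENNReal.ofReal_toReal hw.ne).symm
      calc (f * t2) w = ENNReal.ofReal ((f w).toReal) * t2 w := by rw [Pi.mul_apply, ← hfw]
        _ ≤ _ := aux_xlogx _ (mul_nonneg ENNReal.toReal_nonneg (hQ_pos w).le)
    have h4 : ∀ w : Fin n → ℝ, ENNReal.ofReal ((ν.rnDeriv volume (r w)).toReal * Q w)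
        = (fun z : ({i : Fin n // (i : ℕ) < k} → ℝ) × ({i : Fin n // ¬ (i : ℕ) < k} → ℝ) =>
            ENNReal.ofReal ((ν.rnDeriv volume (ru z.1)).toReal) * ENNReal.ofReal (q z.2)) (e w) := by
      intro w
      rw [ENNReal.ofReal_mul ENNReal.toReal_nonneg]
      rfl
    have hFmeas : Measurable (fun z : ({i : Fin n // (i : ℕ) < k} → ℝ) × ({i : Fin n // ¬ (i : ℕ) < k} → ℝ) =>
        ENNReal.ofReal ((ν.rnDeriv volume (ru z.1)).toReal) * ENNReal.ofReal (q z.2)) :=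
      (((hg_meas.comp (hru.measurable.comp measurable_fst)).ennreal_toReal).ennreal_ofReal).mul
        ((hq_meas.comp measurable_snd).ennreal_ofReal)
    have h3 : ∫⁻ w, ENNReal.ofReal ((ν.rnDeriv volume (r w)).toReal * Q w)
          ∂(volume : Measure (Fin n → ℝ))
        = (∫⁻ y, ENNReal.ofReal ((ν.rnDeriv volume y).toReal) ∂(volume : Measure (Fin k → ℝ)))
          * ∫⁻ v, ENNReal.ofReal (q v)
              ∂(volume : Measure ({i : Fin n // ¬ (i : ℕ) < k} → ℝ)) := by
      simp_rw [h4]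
      rw [he.lintegral_comp hFmeas]
      have hpm := lintegral_prod_mul (μ := (volume : Measure ({i : Fin n // (i : ℕ) < k} → ℝ)))
        (ν := (volume : Measure ({i : Fin n // ¬ (i : ℕ) < k} → ℝ)))
        (f := fun u : {i : Fin n // (i : ℕ) < k} → ℝ =>
          ENNReal.ofReal ((ν.rnDeriv volume (ru u)).toReal))
        (g := fun v : {i : Fin n // ¬ (i : ℕ) < k} → ℝ => ENNReal.ofReal (q v))
        (((hg_meas.comp hru.measurable).ennreal_toReal).ennreal_ofReal).aemeasurable
        ((hq_meas.ennreal_ofReal)).aemeasurable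
      rw [hpm]
      congr 1
      exact hru.lintegral_comp ((hg_meas.ennreal_toReal).ennreal_ofReal)
    have h5 : (∫⁻ y, ENNReal.ofReal ((ν.rnDeriv volume y).toReal)
        ∂(volume : Measure (Fin k → ℝ))) ≤ 1 := by
      calc ∫⁻ y, ENNReal.ofReal ((ν.rnDeriv volume y).toReal) ∂(volume : Measure (Fin k → ℝ))
          ≤ ∫⁻ y, ν.rnDeriv volume y ∂(volume : Measure (Fin k → ℝ)) :=
            lintegral_mono fun y => ENNReal.ofReal_toReal_le
        _ = ν Set.univ := Measure.lintegral_rnDeriv habs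
        _ = 1 := measure_univ
    have h6 : ∫⁻ v, ENNReal.ofReal (q v)
        ∂(volume : Measure ({i : Fin n // ¬ (i : ℕ) < k} → ℝ)) < ⊤ := by
      have hnr : (Module.finrank ℝ ({i : Fin n // ¬ (i : ℕ) < k} → ℝ) : ℝ) < (n : ℝ) := by
        rw [Module.finrank_fintype_fun_eq_card]
        have h0 : ¬ ¬ ((⟨0, lt_of_lt_of_le hk1 hk.le⟩ : Fin n) : ℕ) < k := not_not_intro hk1
        have hcard := Fintype.card_subtype_lt (p := fun i : Fin n => ¬ (i : ℕ) < k) h0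
        rw [Fintype.card_fin] at hcard
        exact_mod_cast hcard
      exact (integrable_one_add_norm hnr).lintegral_lt_top
    calc ∫⁻ w, t2 w ∂μ'' = ∫⁻ w, (f * t2) w ∂(volume : Measure (Fin n → ℝ)) := h1
      _ ≤ ∫⁻ w, ENNReal.ofReal ((ν.rnDeriv volume (r w)).toReal * Q w)
            ∂(volume : Measure (Fin n → ℝ)) := lintegral_mono_ae h2
      _ = _ := h3
      _ < ⊤ := ENNReal.mul_lt_top (lt_of_le_of_lt h5 ENNReal.one_lt_top) h6
  -- third term : from the moment hypothesis
  have hD : ∫⁻ w, t3 w ∂μ'' < ⊤ := by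
    set c2 : ℝ := ((n:ℝ)/β) * (Real.sqrt n) ^ β with hc2def
    have hc2 : 0 ≤ c2 := by positivity
    have hptw : ∀ x : Fin n → ℝ, t3 (eL x)
        ≤ ENNReal.ofReal ((n:ℝ) * Real.log 2)
          + ENNReal.ofReal c2 * ENNReal.ofReal ((∑ i, |x i| ^ α) ^ (β / α)) := by
      intro x
      have hcall := aux_t3_bound (k := k) α β hα hβ V hVV x ((e (eL x)).2) (fun j => rfl)
      exact hcall
    have hmommeas : Measurable fun x : Fin n → ℝ =>
        ENNReal.ofReal ((∑ i, |x i| ^ α) ^ (β / α)) := by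
      apply Measurable.ennreal_ofReal
      apply Continuous.measurable
      apply Continuous.rpow_const
      · exact continuous_finset_sum _ fun i _ =>
          ((continuous_apply i).abs).rpow_const fun x => Or.inr hα.le
      · intro x; right; positivity
    have hmap3 : ∫⁻ w, t3 w ∂μ'' = ∫⁻ x, t3 (eL x) ∂μ := by
      rw [hμ''def, lintegral_map ht3_meas eL.measurable]
    rw [hmap3]
    calc ∫⁻ x, t3 (eL x) ∂μ
        ≤ ∫⁻ x, (ENNReal.ofReal ((n:ℝ) * Real.log 2)
            + ENNReal.ofReal c2 * ENNReal.ofReal ((∑ i, |x i| ^ α) ^ (β / α))) ∂μ :=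
          lintegral_mono fun x => hptw x
      _ = ENNReal.ofReal ((n:ℝ) * Real.log 2) * μ Set.univ
          + ENNReal.ofReal c2 * ∫⁻ x, ENNReal.ofReal ((∑ i, |x i| ^ α) ^ (β / α)) ∂μ := by
          rw [lintegral_add_left measurable_const, lintegral_const,
            lintegral_const_mul _ hmommeas]
      _ < ⊤ := by
          apply ENNReal.add_lt_top.mpr
          constructor
          · exact ENNReal.mul_lt_top ENNReal.ofReal_lt_top (measure_lt_top _ _)
          · exact ENNReal.mul_lt_top ENNReal.ofReal_lt_top hmom
  -- assembling
  refine ⟨habs, ?_⟩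
  show ∫⁻ y, G y ∂ν < ⊤
  rw [hν_eq, lintegral_map hG_meas hr_meas]
  calc ∫⁻ w, G (r w) ∂μ'' ≤ ∫⁻ w, (t1 w + t2 w + t3 w) ∂μ'' := lintegral_mono_ae hA
    _ = (∫⁻ w, t1 w ∂μ'' + ∫⁻ w, t2 w ∂μ'') + ∫⁻ w, t3 w ∂μ'' := by
        rw [lintegral_add_right _ ht3_meas, lintegral_add_right _ ht2_meas]
    _ < ⊤ := ENNReal.add_lt_top.mpr ⟨ENNReal.add_lt_top.mpr ⟨hB, hC⟩, hD⟩

end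
end
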